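/- Let m = ⌊q/2⌋ (if q = 2m+1, the canonical basis contains an extra vector e₀ with h(e₀) = 0). For every integer p with 1 ≤ p ≤ q−1 and every p-form ω on V, ⟨B_{R_ext}^{[p]} ω, ω⟩ ≥ −p(q−p) b_m² |ω|². -/

import Mathlib

open scoped BigOperators

namespace Paper

noncomputable section

/-- Coefficients of exterior forms w.r.t. the fixed orthonormal basis `e₁,…,e_q` of `V = ℝ^q`:
a form is identified with its family of coefficients indexed by subsets of `Fin q`. -/
abbrev Ext (q : ℕ) := Finset (Fin q) → ℝ

variable {q : ℕ}

/-- `(-1)^{#{j ∈ s | j < i}}` -/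
def sgn (i : Fin q) (s : Finset (Fin q)) : ℝ := (-1 : ℝ) ^ (s.filter fun j => j < i).card

/-- Exterior multiplication by the basis vector `e_i`. -/
def wB (i : Fin q) (ω : Ext q) : Ext q := fun s =>
  if i ∈ s then sgn i (s.erase i) * ω (s.erase i) else 0

/-- Interior product (contraction) with the basis vector `e_i`. -/
def iB (i : Fin q) (ω : Ext q) : Ext q := fun s =>
  if i ∈ s then 0 else sgn i s * ω (insert i s)

/-- The basis monomial `e_{i₁} ∧ ⋯ ∧ e_{i_p}`, for `s = {i₁ < ⋯ < i_p}`. -/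
def bF (s : Finset (Fin q)) : Ext q := fun t => if t = s then 1 else 0

/-- The basis vector `e_i` of `V = ℝ^q`. -/
def eB (i : Fin q) : Fin q → ℝ := Pi.single i 1

/-- Exterior multiplication by the vector `X ∈ V`. -/
def wV (X : Fin q → ℝ) (ω : Ext q) : Ext q := ∑ i, X i • wB i ω

/-- Interior product with the vector `X ∈ V`. -/
def iV (X : Fin q → ℝ) (ω : Ext q) : Ext q := ∑ i, X i • iB i ω

/-- Clifford multiplication `X · ω = X ∧ ω − X ⌟ ω` of a vector with a form. -/
def clV (X : Fin q → ℝ) (ω : Ext q) : Ext q := wV X ω - iV X ω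

/-- Clifford multiplication `e_{i₁} · e_{i₂} ⋯ e_{i_p} · ω` for `s = {i₁ < ⋯ < i_p}`. -/
def clB (s : Finset (Fin q)) (ω : Ext q) : Ext q :=
  (Finset.sort s (· ≤ ·)).foldr (fun i τ => clV (eB i) τ) ω

/-- Clifford multiplication of two forms. -/
def clM (ω₁ ω₂ : Ext q) : Ext q := ∑ s : Finset (Fin q), ω₁ s • clB s ω₂

/-- The bracket `[ω₁, ω₂] = ω₁ · ω₂ − ω₂ · ω₁`. -/
def brkt (ω₁ ω₂ : Ext q) : Ext q := clM ω₁ ω₂ - clM ω₂ ω₁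

/-- Exterior multiplication by the monomial `e_{i₁} ∧ ⋯ ∧ e_{i_p}`. -/
def wBs (s : Finset (Fin q)) (ω : Ext q) : Ext q :=
  (Finset.sort s (· ≤ ·)).foldr (fun i τ => wB i τ) ω

/-- The wedge product of two forms. -/
def wM (ω₁ ω₂ : Ext q) : Ext q := ∑ s : Finset (Fin q), ω₁ s • wBs s ω₂

/-- The inner product on forms, for which the basis monomials are orthonormal. -/
def ip (ω φ : Ext q) : ℝ := ∑ s : Finset (Fin q), ω s * φ s

/-- `ω` is a form of (pure) degree `p`. -/
def homog (p : ℕ) (ω : Ext q) : Prop := ∀ s : Finset (Fin q), s.card ≠ p → ω s = 0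

/-- The inner product of two vectors of `V = ℝ^q`. -/
def dotP (X Y : Fin q → ℝ) : ℝ := ∑ i, X i * Y i

/-- A vector of `V` regarded as a 1-form. -/
def oneF (X : Fin q → ℝ) : Ext q := ∑ i, X i • bF {i}

/-- The wedge `X ∧ Y` of two vectors. -/
def w2 (X Y : Fin q → ℝ) : Ext q := wV X (oneF Y)

/-- Two-element subsets, indexing the canonical orthonormal basis of `Λ²V`. -/
def twoSets (q : ℕ) : Finset (Finset (Fin q)) := Finset.univ.filter fun s => s.card = 2

/-- The Bochner operator quadratic form `⟨B_R^{[p]} ω, φ⟩ =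
(1/4) Σ_{r,s} ⟨R ψ_r, ψ_s⟩ ⟨[ψ_r,ω],[ψ_s,φ]⟩`, computed in the canonical
orthonormal basis `{e_i ∧ e_j}_{i<j}` of `Λ²V`. -/
def Bform (R : Ext q →ₗ[ℝ] Ext q) (ω φ : Ext q) : ℝ :=
  (1 / 4 : ℝ) * ∑ s ∈ twoSets q, ∑ t ∈ twoSets q,
    ip (R (bF s)) (bF t) * ip (brkt (bF s) ω) (brkt (bF t) φ)

/-! ### Auxiliary lemmas -/

section Aux
variable {q : ℕ}

lemma sgn_mul_self (i : Fin q) (s : Finset (Fin q)) : sgn i s * sgn i s = 1 := by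
  unfold sgn
  rw [← pow_add]
  exact Even.neg_one_pow ⟨_, rfl⟩

lemma sgn_sq (i : Fin q) (s : Finset (Fin q)) : sgn i s ^ 2 = 1 := by
  rw [pow_two]; exact sgn_mul_self i s

lemma abs_sgn (i : Fin q) (s : Finset (Fin q)) : |sgn i s| = 1 := by
  unfold sgn; rw [abs_pow, abs_neg, abs_one, one_pow]

lemma sgn_erase_self (a : Fin q) (s : Finset (Fin q)) : sgn a (s.erase a) = sgn a s := by
  unfold sgn
  congr 1
  rw [Finset.filter_erase]
  congr 1
  apply Finset.erase_eq_of_notMem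
  simp only [Finset.mem_filter, not_and]
  exact fun _ => lt_irrefl a

lemma sgn_erase_of_lt {a b : Fin q} (hab : a < b) (s : Finset (Fin q)) :
    sgn a (s.erase b) = sgn a s := by
  unfold sgn
  congr 1
  rw [Finset.filter_erase]
  congr 1
  apply Finset.erase_eq_of_notMem
  simp only [Finset.mem_filter, not_and]
  exact fun _ => not_lt.2 hab.le

lemma sgn_insert_of_lt {a b : Fin q} (hab : a < b) (s : Finset (Fin q)) :
    sgn a (insert b s) = sgn a s := by
  unfold sgn
  congr 1
  rw [Finset.filter_insert, if_neg (not_lt.2 hab.le)]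

lemma sgn_erase_of_gt {a b : Fin q} (hab : b < a) {s : Finset (Fin q)} (hb : b ∈ s) :
    sgn a (s.erase b) = -sgn a s := by
  unfold sgn
  rw [Finset.filter_erase]
  have hb' : b ∈ s.filter (fun j => j < a) := Finset.mem_filter.2 ⟨hb, hab⟩
  have hcard : (s.filter (fun j => j < a)).card = ((s.filter (fun j => j < a)).erase b).card + 1 := by
    rw [Finset.card_erase_of_mem hb']
    have : 1 ≤ (s.filter (fun j => j < a)).card := Finset.card_pos.2 ⟨b, hb'⟩
    omega
  rw [hcard, pow_succ]
  ring

lemma sgn_insert_of_gt {a b : Fin q} (hab : b < a) {s : Finset (Fin q)} (hb : b ∉ s) :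
    sgn a (insert b s) = -sgn a s := by
  unfold sgn
  rw [Finset.filter_insert, if_pos hab]
  have : b ∉ s.filter (fun j => j < a) := fun hc => hb (Finset.mem_filter.1 hc).1
  rw [Finset.card_insert_of_notMem this, pow_succ]
  ring

lemma wV_eB (a : Fin q) (φ : Ext q) : wV (eB a) φ = wB a φ := by
  unfold wV eB
  rw [Finset.sum_eq_single a]
  · rw [Pi.single_eq_same, one_smul]
  · intro b _ hb; rw [Pi.single_apply, if_neg hb, zero_smul]
  · intro hb; exact absurd (Finset.mem_univ a) hb

lemma iV_eB (a : Fin q) (φ : Ext q) : iV (eB a) φ = iB a φ := by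
  unfold iV eB
  rw [Finset.sum_eq_single a]
  · rw [Pi.single_eq_same, one_smul]
  · intro b _ hb; rw [Pi.single_apply, if_neg hb, zero_smul]
  · intro hb; exact absurd (Finset.mem_univ a) hb

lemma clV_eB_apply (a : Fin q) (φ : Ext q) (s : Finset (Fin q)) :
    clV (eB a) φ s = if a ∈ s then sgn a s * φ (s.erase a) else -(sgn a s * φ (insert a s)) := by
  unfold clV
  rw [wV_eB, iV_eB]
  simp only [Pi.sub_apply, wB, iB]
  by_cases hs : a ∈ s
  · rw [if_pos hs, if_pos hs, if_pos hs, sgn_erase_self]; ring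
  · rw [if_neg hs, if_neg hs, if_neg hs]; ring

end Aux
section Aux2
variable {q : ℕ}

lemma sgn_insert_self (a : Fin q) (s : Finset (Fin q)) : sgn a (insert a s) = sgn a s := by
  unfold sgn
  rw [Finset.filter_insert, if_neg (lt_irrefl a)]

lemma clV_anticomm {a b : Fin q} (hab : a ≠ b) (φ : Ext q) :
    clV (eB a) (clV (eB b) φ) = -(clV (eB b) (clV (eB a) φ)) := by
  funext s
  simp only [Pi.neg_apply, clV_eB_apply]
  by_cases ha : a ∈ s <;> by_cases hb : b ∈ s
  · rw [if_pos ha, if_pos hb, if_pos (Finset.mem_erase.2 ⟨hab.symm, hb⟩),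
      if_pos (Finset.mem_erase.2 ⟨hab, ha⟩), Finset.erase_right_comm]
    rcases lt_or_gt_of_ne hab with hlt | hlt
    · rw [sgn_erase_of_lt hlt s, sgn_erase_of_gt hlt ha]; ring
    · rw [sgn_erase_of_lt hlt s, sgn_erase_of_gt hlt hb]; ring
  · rw [if_pos ha, if_neg hb, if_neg (fun hc => hb (Finset.mem_of_mem_erase hc)),
      if_pos (Finset.mem_insert_of_mem ha),
      show (insert b s).erase a = insert b (s.erase a) from
        Finset.erase_insert_of_ne hab.symm]
    rcases lt_or_gt_of_ne hab with hlt | hlt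
    · rw [sgn_erase_of_gt hlt ha, sgn_insert_of_lt hlt s]; ring
    · rw [sgn_erase_of_lt hlt s, sgn_insert_of_gt hlt hb]; ring
  · rw [if_neg ha, if_pos hb, if_pos (Finset.mem_insert_of_mem hb),
      if_neg (fun hc => ha (Finset.mem_of_mem_erase hc)),
      show (insert a s).erase b = insert a (s.erase b) from
        Finset.erase_insert_of_ne hab]
    rcases lt_or_gt_of_ne hab with hlt | hlt
    · rw [sgn_insert_of_gt hlt ha, sgn_erase_of_lt hlt s]; ring
    · rw [sgn_insert_of_lt hlt s, sgn_erase_of_gt hlt hb]; ring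
  · have hb' : b ∉ insert a s := by
      simp only [Finset.mem_insert]
      push_neg
      exact ⟨fun hc => hab hc.symm, hb⟩
    have ha' : a ∉ insert b s := by
      simp only [Finset.mem_insert]
      push_neg
      exact ⟨hab, ha⟩
    rw [if_neg ha, if_neg hb, if_neg hb', if_neg ha', Finset.insert_comm]
    rcases lt_or_gt_of_ne hab with hlt | hlt
    · rw [sgn_insert_of_gt hlt ha, sgn_insert_of_lt hlt s]; ring
    · rw [sgn_insert_of_lt hlt s, sgn_insert_of_gt hlt hb]; ring

lemma clV_invol (a : Fin q) (φ : Ext q) :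
    clV (eB a) (clV (eB a) φ) = -φ := by
  funext s
  simp only [Pi.neg_apply, clV_eB_apply]
  by_cases ha : a ∈ s
  · rw [if_pos ha, if_neg (Finset.notMem_erase a s), Finset.insert_erase ha, sgn_erase_self]
    linear_combination (-(φ s)) * sgn_mul_self a s
  · rw [if_neg ha, if_pos (Finset.mem_insert_self a s), Finset.erase_insert ha, sgn_insert_self]
    linear_combination (-(φ s)) * sgn_mul_self a s

end Aux2
section Aux3
variable {q : ℕ}

/-- Clifford product with a list of basis vectors. -/
def CL (l : List (Fin q)) (φ : Ext q) : Ext q := l.foldr (fun i τ => clV (eB i) τ) φ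

lemma clB_eq_CL (s : Finset (Fin q)) (φ : Ext q) : clB s φ = CL (Finset.sort s (· ≤ ·)) φ := rfl

@[simp] lemma CL_nil (φ : Ext q) : CL [] φ = φ := rfl

@[simp] lemma CL_cons (a : Fin q) (l : List (Fin q)) (φ : Ext q) :
    CL (a :: l) φ = clV (eB a) (CL l φ) := rfl

lemma clV_eB_smul (a : Fin q) (c : ℝ) (φ : Ext q) :
    clV (eB a) (c • φ) = c • clV (eB a) φ := by
  funext s
  simp only [Pi.smul_apply, smul_eq_mul, clV_eB_apply]
  split_ifs <;> ring

lemma clV_eB_add (a : Fin q) (φ ψ : Ext q) :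
    clV (eB a) (φ + ψ) = clV (eB a) φ + clV (eB a) ψ := by
  funext s
  simp only [Pi.add_apply, clV_eB_apply]
  split_ifs <;> ring

lemma CL_smul (l : List (Fin q)) (c : ℝ) (φ : Ext q) :
    CL l (c • φ) = c • CL l φ := by
  induction l with
  | nil => rfl
  | cons a l ih => rw [CL_cons, CL_cons, ih, clV_eB_smul]

lemma clV_eB_sum {ι : Type*} (a : Fin q) (A : Finset ι) (F : ι → Ext q) :
    clV (eB a) (∑ i ∈ A, F i) = ∑ i ∈ A, clV (eB a) (F i) := by
  classical
  induction A using Finset.induction_on with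
  | empty =>
      funext s
      simp [clV_eB_apply]
  | insert _ _ hnot ih =>
      rw [Finset.sum_insert hnot, Finset.sum_insert hnot, clV_eB_add, ih]

lemma CL_sum {ι : Type*} (l : List (Fin q)) (A : Finset ι) (F : ι → Ext q) :
    CL l (∑ i ∈ A, F i) = ∑ i ∈ A, CL l (F i) := by
  induction l with
  | nil => rfl
  | cons a l ih =>
      simp only [CL_cons]
      rw [ih, clV_eB_sum]

/-- Moving a Clifford generator past a product of distinct generators. -/
lemma clV_CL_comm (a : Fin q) (l : List (Fin q)) (hl : l.Nodup) (φ : Ext q) :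
    clV (eB a) (CL l φ)
      = ((if a ∈ l then (-1 : ℝ) else 1) * (-1) ^ l.length) • CL l (clV (eB a) φ) := by
  induction l with
  | nil => simp
  | cons b l ih =>
      have hl' : l.Nodup := (List.nodup_cons.1 hl).2
      by_cases hab : a = b
      · subst hab
        have hnotl : a ∉ l := (List.nodup_cons.1 hl).1
        have ihl := ih hl'
        rw [if_neg hnotl] at ihl
        have h2 : clV (eB a) (clV (eB a) (CL l φ))
            = clV (eB a) ((1 * (-1 : ℝ) ^ l.length) • CL l (clV (eB a) φ)) := by rw [← ihl]
        rw [clV_invol, clV_eB_smul] at h2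
        rw [CL_cons, CL_cons, clV_invol, h2]
        congr 1
        rw [if_pos (List.mem_cons_self), List.length_cons, pow_succ]
        ring
      · rw [CL_cons, CL_cons, clV_anticomm hab, ih hl', List.length_cons]
        have hmem : (a ∈ b :: l) ↔ (a ∈ l) := by
          simp [List.mem_cons, hab]
        funext s
        simp only [Pi.neg_apply, Pi.smul_apply, smul_eq_mul]
        rw [clV_eB_smul]
        simp only [Pi.smul_apply, smul_eq_mul]
        by_cases hal : a ∈ l
        · rw [if_pos hal, if_pos (hmem.2 hal), pow_succ]; ring
        · rw [if_neg hal, if_neg (fun hc => hal (hmem.1 hc)), pow_succ]; ring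

end Aux3
section Aux4
variable {q : ℕ}

lemma CL_CL (l₁ l₂ : List (Fin q)) (h₁ : l₁.Nodup) (h₂ : l₂.Nodup) (φ : Ext q) :
    CL l₁ (CL l₂ φ)
      = (((-1 : ℝ) ^ (l₁.length * l₂.length))
          * (-1) ^ (l₁.toFinset ∩ l₂.toFinset).card) • CL l₂ (CL l₁ φ) := by
  induction l₁ with
  | nil => simp
  | cons a l ih =>
      have hnot : a ∉ l := (List.nodup_cons.1 h₁).1
      have hl : l.Nodup := (List.nodup_cons.1 h₁).2
      rw [CL_cons, ih hl, clV_eB_smul, clV_CL_comm a l₂ h₂, ← CL_cons, smul_smul]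
      congr 1
      have hcard : ((a :: l).toFinset ∩ l₂.toFinset).card
          = (l.toFinset ∩ l₂.toFinset).card + (if a ∈ l₂ then 1 else 0) := by
        rw [List.toFinset_cons]
        by_cases hal2 : a ∈ l₂
        · rw [if_pos hal2]
          rw [Finset.insert_inter_of_mem (List.mem_toFinset.2 hal2)]
          rw [Finset.card_insert_of_notMem]
          intro hc
          exact hnot (List.mem_toFinset.1 (Finset.mem_inter.1 hc).1)
        · rw [if_neg hal2, Finset.insert_inter_of_notMem
            (fun hc => hal2 (List.mem_toFinset.1 hc)), add_zero]
      rw [hcard, List.length_cons]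
      by_cases hal2 : a ∈ l₂
      · rw [if_pos hal2, if_pos hal2, pow_add, pow_one, add_mul, one_mul, pow_add]
        ring
      · rw [if_neg hal2, if_neg hal2, add_zero, add_mul, one_mul, pow_add]
        ring

/-- Clifford products by disjoint-even-intersection monomials commute. -/
lemma clB_comm (r s : Finset (Fin q)) (hr : r.card = 2)
    (heven : (r ∩ s).card % 2 = 0) (φ : Ext q) :
    clB r (clB s φ) = clB s (clB r φ) := by
  rw [clB_eq_CL, clB_eq_CL, clB_eq_CL (s := s), clB_eq_CL (s := r),
    CL_CL _ _ (Finset.sort_nodup r _) (Finset.sort_nodup s _)]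
  rw [Finset.sort_toFinset, Finset.sort_toFinset, Finset.length_sort, Finset.length_sort, hr]
  have h2 : ((-1 : ℝ)) ^ (2 * s.card) = 1 := by
    rw [pow_mul]; norm_num
  have h3 : ((-1 : ℝ)) ^ (r ∩ s).card = 1 := by
    rcases Nat.even_or_odd (r ∩ s).card with he | ho
    · exact he.neg_one_pow
    · exact absurd (Nat.odd_iff.1 ho) (by omega)
  rw [h2, h3, one_mul, one_smul]

lemma symmDiff_singleton_mem {a : Fin q} {t : Finset (Fin q)} (ha : a ∈ t) :
    symmDiff t {a} = t.erase a := by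
  ext x
  simp only [Finset.mem_symmDiff, Finset.mem_singleton, Finset.mem_erase]
  constructor
  · rintro (⟨hx, hne⟩ | ⟨rfl, hx⟩)
    · exact ⟨hne, hx⟩
    · exact absurd ha hx
  · rintro ⟨hne, hx⟩
    exact Or.inl ⟨hx, hne⟩

lemma symmDiff_singleton_not_mem {a : Fin q} {t : Finset (Fin q)} (ha : a ∉ t) :
    symmDiff t {a} = insert a t := by
  ext x
  simp only [Finset.mem_symmDiff, Finset.mem_singleton, Finset.mem_insert]
  constructor
  · rintro (⟨hx, hne⟩ | ⟨rfl, hx⟩)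
    · exact Or.inr hx
    · exact Or.inl rfl
  · rintro (rfl | hx)
    · exact Or.inr ⟨rfl, ha⟩
    · exact Or.inl ⟨hx, fun hc => ha (hc ▸ hx)⟩

lemma clV_bF (a : Fin q) (t : Finset (Fin q)) :
    clV (eB a) (bF t)
      = (((if a ∈ t then (-1 : ℝ) else 1) * sgn a t)) • bF (symmDiff t {a}) := by
  funext s
  simp only [Pi.smul_apply, smul_eq_mul, clV_eB_apply, bF]
  by_cases ha : a ∈ t
  · rw [if_pos ha, symmDiff_singleton_mem ha]
    by_cases hs : a ∈ s
    · rw [if_pos hs, if_neg (fun hc : s.erase a = t => (hc ▸ Finset.notMem_erase a s) ha),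
        if_neg (fun hc : s = t.erase a => (Finset.notMem_erase a t) (hc ▸ hs))]
      ring
    · rw [if_neg hs]
      by_cases he : s = t.erase a
      · rw [if_pos he, if_pos (by rw [he, Finset.insert_erase ha]), he, sgn_erase_self]
        ring
      · rw [if_neg he, if_neg (fun hc : insert a s = t => he (by
          rw [← hc, Finset.erase_insert hs]))]
        ring
  · rw [if_neg ha, symmDiff_singleton_not_mem ha]
    by_cases hs : a ∈ s
    · rw [if_pos hs]
      by_cases he : s = insert a t
      · rw [if_pos (by rw [he, Finset.erase_insert ha]), if_pos he, he, sgn_insert_self]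
        ring
      · rw [if_neg (fun hc : s.erase a = t => he (by rw [← hc, Finset.insert_erase hs])),
          if_neg he]
        ring
    · rw [if_neg hs, if_neg (fun hc : insert a s = t => ha (hc ▸ Finset.mem_insert_self a s)),
        if_neg (fun hc : s = insert a t => hs (hc ▸ Finset.mem_insert_self a t))]
      ring

end Aux4
section Aux5
variable {q : ℕ}

lemma CL_bF (l : List (Fin q)) (hl : l.Nodup) (t : Finset (Fin q)) :
    ∃ c : ℝ, |c| ≤ 1 ∧ CL l (bF t) = c • bF (symmDiff l.toFinset t) := by
  induction l with
  | nil =>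
      refine ⟨1, by norm_num, ?_⟩
      rw [one_smul]
      show bF t = bF (symmDiff List.nil.toFinset t)
      have hempty : symmDiff (List.nil : List (Fin q)).toFinset t = t := by
        ext x
        simp [Finset.mem_symmDiff]
      rw [hempty]
  | cons a l ih =>
      obtain ⟨c, hc, hval⟩ := ih (List.nodup_cons.1 hl).2
      have hnot : a ∉ l := (List.nodup_cons.1 hl).1
      refine ⟨((if a ∈ symmDiff l.toFinset t then (-1 : ℝ) else 1)
        * sgn a (symmDiff l.toFinset t)) * c, ?_, ?_⟩
      · rw [abs_mul]
        calc |(if a ∈ symmDiff l.toFinset t then (-1:ℝ) else 1) * sgn a (symmDiff l.toFinset t)| * |c|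
            ≤ |(if a ∈ symmDiff l.toFinset t then (-1:ℝ) else 1) * sgn a (symmDiff l.toFinset t)| * 1 := by
              apply mul_le_mul_of_nonneg_left hc (abs_nonneg _)
          _ = 1 := by
              rw [mul_one, abs_mul, abs_sgn, mul_one]
              split_ifs <;> norm_num
      · rw [CL_cons, hval, clV_eB_smul, clV_bF]
        rw [smul_smul, mul_comm c]
        congr 1
        rw [List.toFinset_cons, symmDiff_comm (insert a l.toFinset) t,
          show insert a l.toFinset = symmDiff l.toFinset {a} from
            (symmDiff_singleton_not_mem (fun hc => hnot (List.mem_toFinset.1 hc))).symm,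
          ← symmDiff_assoc, symmDiff_comm t l.toFinset]

lemma CL_bF_sorted (l : List (Fin q)) (hsort : List.Pairwise (· < ·) l) (t : Finset (Fin q))
    (ht : ∀ a ∈ l, ∀ x ∈ t, a < x) : CL l (bF t) = bF (l.toFinset ∪ t) := by
  induction l with
  | nil => simp
  | cons a l ih =>
      have hlt : ∀ b ∈ l, a < b := fun b hb => (List.pairwise_cons.1 hsort).1 b hb
      rw [CL_cons, ih (List.pairwise_cons.1 hsort).2 (fun b hb x hx => ht b (List.mem_cons_of_mem a hb) x hx),
        clV_bF]
      have hnotmem : a ∉ l.toFinset ∪ t := by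
        intro hc
        rcases Finset.mem_union.1 hc with hc | hc
        · exact lt_irrefl a (hlt a (List.mem_toFinset.1 hc))
        · exact lt_irrefl a (ht a (List.mem_cons_self) a hc)
      rw [if_neg hnotmem]
      have hsgn : sgn a (l.toFinset ∪ t) = 1 := by
        unfold sgn
        rw [show (l.toFinset ∪ t).filter (fun j => j < a) = ∅ from ?_]
        · simp
        · rw [Finset.filter_eq_empty_iff]
          intro x hx
          rcases Finset.mem_union.1 hx with hc | hc
          · exact not_lt.2 (hlt x (List.mem_toFinset.1 hc)).le
          · exact not_lt.2 (ht a (List.mem_cons_self) x hc).le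
      rw [hsgn, one_mul, one_smul, symmDiff_singleton_not_mem hnotmem,
        List.toFinset_cons, Finset.insert_union]

lemma clB_bF_empty (s : Finset (Fin q)) : clB s (bF (∅ : Finset (Fin q))) = bF s := by
  rw [clB_eq_CL, CL_bF_sorted _ (Finset.sortedLT_sort s).pairwise _ (by simp), Finset.sort_toFinset,
    Finset.union_empty]

lemma clB_bF (s t : Finset (Fin q)) :
    ∃ c : ℝ, |c| ≤ 1 ∧ clB s (bF t) = c • bF (symmDiff s t) := by
  rw [clB_eq_CL]
  obtain ⟨c, hc, hval⟩ := CL_bF (Finset.sort s (· ≤ ·)) (Finset.sort_nodup s _) t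
  rw [Finset.sort_toFinset] at hval
  exact ⟨c, hc, hval⟩

lemma bF_expand (ω : Ext q) : ω = ∑ S : Finset (Fin q), ω S • bF S := by
  funext t
  rw [Finset.sum_apply]
  simp only [Pi.smul_apply, bF, smul_eq_mul]
  rw [Finset.sum_eq_single t]
  · simp
  · intro S _ hS
    rw [if_neg (fun hc => hS hc.symm), mul_zero]
  · intro hc; exact absurd (Finset.mem_univ t) hc

lemma clM_bF_left (r : Finset (Fin q)) (ω : Ext q) : clM (bF r) ω = clB r ω := by
  unfold clM
  rw [Finset.sum_eq_single r]
  · simp [bF]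
  · intro S _ hS
    simp only [bF]
    rw [if_neg hS, zero_smul]
  · intro hc; exact absurd (Finset.mem_univ r) hc

/-- The coefficient of the bracket `[e_r, ω]` on basis forms. -/
def ddc (r S : Finset (Fin q)) : ℝ :=
  (clB r (bF S) - clB S (bF r)) (symmDiff S r)

lemma W_eq (r S : Finset (Fin q)) :
    clB r (bF S) - clB S (bF r) = ddc r S • bF (symmDiff S r) ∧ |ddc r S| ≤ 2 := by
  obtain ⟨c₁, hc₁, h₁⟩ := clB_bF r S
  obtain ⟨c₂, hc₂, h₂⟩ := clB_bF S r
  have hW : clB r (bF S) - clB S (bF r) = (c₁ - c₂) • bF (symmDiff S r) := by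
    rw [h₁, h₂, symmDiff_comm r S, sub_smul]
  have hd : ddc r S = c₁ - c₂ := by
    unfold ddc
    rw [hW]
    simp [bF]
  constructor
  · rw [hd, ← hW]
  · rw [hd]
    calc |c₁ - c₂| ≤ |c₁| + |c₂| := abs_sub _ _
      _ ≤ 2 := by linarith

lemma ddc_zero (r S : Finset (Fin q)) (hr : r.card = 2)
    (heven : (S ∩ r).card % 2 = 0) : ddc r S = 0 := by
  unfold ddc
  have : clB r (bF S) = clB S (bF r) := by
    rw [← clB_bF_empty S, ← clB_bF_empty r,
      clB_comm r S hr (by rwa [Finset.inter_comm])]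
  rw [this]
  simp

lemma brkt_bF_apply (r : Finset (Fin q)) (ω : Ext q) (t : Finset (Fin q)) :
    brkt (bF r) ω t = ddc r (symmDiff t r) * ω (symmDiff t r) := by
  have key : brkt (bF r) ω = ∑ S : Finset (Fin q), ω S • (ddc r S • bF (symmDiff S r)) := by
    unfold brkt
    rw [clM_bF_left]
    unfold clM
    rw [show clB r ω = ∑ S : Finset (Fin q), ω S • clB r (bF S) from by
      conv_lhs => rw [bF_expand ω]
      rw [clB_eq_CL, CL_sum]
      refine Finset.sum_congr rfl fun S _ => ?_
      rw [CL_smul]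
      rfl]
    rw [← Finset.sum_sub_distrib]
    refine Finset.sum_congr rfl fun S _ => ?_
    rw [← smul_sub, (W_eq r S).1]
  rw [key, Finset.sum_apply]
  simp only [Pi.smul_apply, smul_eq_mul, bF]
  rw [Finset.sum_eq_single (symmDiff t r)]
  · rw [if_pos (by rw [symmDiff_symmDiff_cancel_right]), mul_one]
    ring
  · intro S _ hS
    rw [if_neg, mul_zero, mul_zero]
    intro hc
    exact hS (by rw [hc, symmDiff_symmDiff_cancel_right])
  · intro hc; exact absurd (Finset.mem_univ _) hc

end Aux5
section Aux6
variable {q : ℕ}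

lemma ip_self_nonneg (f : Ext q) : 0 ≤ ip f f :=
  Finset.sum_nonneg fun s _ => mul_self_nonneg (f s)

lemma ip_sub_expand (f g : Ext q) : ip (f - g) (f - g) = ip f f - 2 * ip f g + ip g g := by
  simp only [ip]
  rw [Finset.mul_sum, ← Finset.sum_sub_distrib, ← Finset.sum_add_distrib]
  exact Finset.sum_congr rfl fun s _ => by simp only [Pi.sub_apply]; ring

lemma ip_add_expand (f g : Ext q) : ip (f + g) (f + g) = ip f f + 2 * ip f g + ip g g := by
  simp only [ip]
  rw [Finset.mul_sum, ← Finset.sum_add_distrib, ← Finset.sum_add_distrib]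
  exact Finset.sum_congr rfl fun s _ => by simp only [Pi.add_apply]; ring

lemma ip_abs_le (f g : Ext q) : |ip f g| ≤ (ip f f + ip g g) / 2 := by
  have h1 : 0 ≤ ip (f - g) (f - g) := ip_self_nonneg _
  have h2 : 0 ≤ ip (f + g) (f + g) := ip_self_nonneg _
  rw [ip_sub_expand] at h1
  rw [ip_add_expand] at h2
  rw [abs_le]
  constructor <;> linarith

end Aux6
section Aux7
variable {q : ℕ}

/-- Diagonal bound: `|[e_r, ω]|² ≤ 4 Σ_{|S∩r| odd} ω_S²`. -/
lemma brkt_diag_le (r : Finset (Fin q)) (hr : r.card = 2) (ω : Ext q) :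
    ip (brkt (bF r) ω) (brkt (bF r) ω)
      ≤ ∑ S : Finset (Fin q), (if (S ∩ r).card % 2 = 1 then 4 * ω S ^ 2 else 0) := by
  unfold ip
  have hre : ∀ t : Finset (Fin q), brkt (bF r) ω t * brkt (bF r) ω t
      = (ddc r (symmDiff t r) * ω (symmDiff t r)) ^ 2 := by
    intro t
    rw [brkt_bF_apply]
    ring
  rw [Finset.sum_congr rfl fun t _ => hre t]
  rw [show (∑ t : Finset (Fin q), (ddc r (symmDiff t r) * ω (symmDiff t r)) ^ 2)
      = ∑ S : Finset (Fin q), (ddc r S * ω S) ^ 2 from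
    Fintype.sum_bijective (fun t => symmDiff t r)
      (Function.Involutive.bijective fun t => symmDiff_symmDiff_cancel_right r t)
      _ _ (fun t => rfl)]
  refine Finset.sum_le_sum fun S _ => ?_
  by_cases hodd : (S ∩ r).card % 2 = 1
  · rw [if_pos hodd]
    have habs := (W_eq r S).2
    have hsq : ddc r S ^ 2 ≤ 4 := by
      have := sq_le_sq' (neg_le_of_abs_le habs) (le_of_abs_le habs)
      linarith
    calc (ddc r S * ω S) ^ 2 = ddc r S ^ 2 * ω S ^ 2 := by ring
      _ ≤ 4 * ω S ^ 2 := mul_le_mul_of_nonneg_right hsq (sq_nonneg _)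
  · rw [if_neg hodd, ddc_zero r S hr (by omega)]
    norm_num

/-- Ordered pairs indexing two-element subsets. -/
def prs (q : ℕ) : Finset (Fin q × Fin q) := Finset.univ.filter fun x => x.1 < x.2

lemma mem_prs {x : Fin q × Fin q} : x ∈ prs q ↔ x.1 < x.2 := by
  unfold prs
  simp

lemma pair_mem_twoSets {x : Fin q × Fin q} (hx : x.1 < x.2) :
    ({x.1, x.2} : Finset (Fin q)) ∈ twoSets q := by
  unfold twoSets
  simp only [Finset.mem_filter, Finset.mem_univ, true_and]
  exact Finset.card_pair hx.ne

lemma sum_twoSets_eq (F : Finset (Fin q) → ℝ) :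
    ∑ r ∈ twoSets q, F r = ∑ x ∈ prs q, F {x.1, x.2} := by
  refine (Finset.sum_bij (fun x hx => ({x.1, x.2} : Finset (Fin q)))
    (fun x hx => pair_mem_twoSets (mem_prs.1 hx)) ?_ ?_ (fun x hx => rfl)).symm
  · intro x hx y hy hxy
    have hx' := mem_prs.1 hx
    have hy' := mem_prs.1 hy
    replace hxy : ({x.1, x.2} : Finset (Fin q)) = {y.1, y.2} := hxy
    have hset : ({x.1, x.2} : Set (Fin q)) = {y.1, y.2} := by
      have := congrArg (fun u : Finset (Fin q) => (u : Set (Fin q))) hxy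
      simpa using this
    rcases Set.pair_eq_pair_iff.1 hset with ⟨h1, h2⟩ | ⟨h1, h2⟩
    · exact Prod.ext h1 h2
    · exfalso
      rw [← h2, ← h1] at hy'
      exact lt_asymm hx' hy'
  · intro r hr
    have hr2 : r.card = 2 := by
      unfold twoSets at hr
      simpa using hr
    obtain ⟨a, bb, hab, rfl⟩ := Finset.card_eq_two.1 hr2
    rcases lt_or_gt_of_ne hab with hlt | hlt
    · exact ⟨(a, bb), mem_prs.2 hlt, rfl⟩
    · exact ⟨(bb, a), mem_prs.2 hlt, by rw [Finset.pair_comm]⟩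

end Aux7
section Aux8
variable {q : ℕ}

lemma inter_pair_card {S : Finset (Fin q)} {a bb : Fin q} (hab : a ≠ bb) :
    (S ∩ {a, bb}).card
      = (if a ∈ S then 1 else 0) + (if bb ∈ S then 1 else 0) := by
  by_cases ha : a ∈ S <;> by_cases hb : bb ∈ S
  · rw [if_pos ha, if_pos hb, show S ∩ {a, bb} = {a, bb} from by
      ext x
      simp only [Finset.mem_inter, Finset.mem_insert, Finset.mem_singleton]
      constructor
      · exact fun hx => hx.2
      · rintro (rfl | rfl) <;> exact ⟨by assumption, by tauto⟩]
    rw [Finset.card_pair hab]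
  · rw [if_pos ha, if_neg hb, show S ∩ {a, bb} = {a} from by
      ext x
      simp only [Finset.mem_inter, Finset.mem_insert, Finset.mem_singleton]
      constructor
      · rintro ⟨hxS, rfl | rfl⟩
        · rfl
        · exact absurd hxS hb
      · rintro rfl; exact ⟨ha, Or.inl rfl⟩]
    rw [Finset.card_singleton]
  · rw [if_neg ha, if_pos hb, show S ∩ {a, bb} = {bb} from by
      ext x
      simp only [Finset.mem_inter, Finset.mem_insert, Finset.mem_singleton]
      constructor
      · rintro ⟨hxS, rfl | rfl⟩
        · exact absurd hxS ha
        · rfl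
      · rintro rfl; exact ⟨hb, Or.inr rfl⟩]
    rw [Finset.card_singleton]
  · rw [if_neg ha, if_neg hb, show S ∩ {a, bb} = ∅ from by
      ext x
      simp only [Finset.mem_inter, Finset.mem_insert, Finset.mem_singleton,
        Finset.notMem_empty, iff_false, not_and]
      rintro hxS (rfl | rfl)
      · exact ha hxS
      · exact hb hxS]
    rfl

lemma count_odd_pairs_le (S : Finset (Fin q)) :
    ((prs q).filter (fun x => (S ∩ {x.1, x.2}).card % 2 = 1)).card
      ≤ S.card * (q - S.card) := by
  have hcompl : Sᶜ.card = q - S.card := by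
    rw [Finset.card_compl, Fintype.card_fin]
  rw [← hcompl, ← Finset.card_product]
  apply Finset.card_le_card_of_injOn
    (fun x => if x.1 ∈ S then x else (x.2, x.1))
  · intro x hx
    rw [Finset.mem_coe, Finset.mem_filter] at hx
    have hlt := mem_prs.1 hx.1
    have hodd := hx.2
    rw [inter_pair_card hlt.ne] at hodd
    by_cases h1 : x.1 ∈ S <;> by_cases h2 : x.2 ∈ S
    · rw [if_pos h1, if_pos h2] at hodd; omega
    · simp only [Finset.mem_coe, if_pos h1]
      exact Finset.mem_product.2 ⟨h1, Finset.mem_compl.2 h2⟩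
    · simp only [Finset.mem_coe, if_neg h1]
      exact Finset.mem_product.2 ⟨h2, Finset.mem_compl.2 h1⟩
    · rw [if_neg h1, if_neg h2] at hodd; omega
  · intro x hx y hy hxy
    simp only [Finset.coe_filter, Set.mem_setOf_eq] at hx hy
    have hltx := mem_prs.1 hx.1
    have hlty := mem_prs.1 hy.1
    by_cases h1 : x.1 ∈ S <;> by_cases h2 : y.1 ∈ S <;>
      simp only [if_pos, if_neg, h1, h2, if_true, if_false] at hxy
    · exact hxy
    · exfalso
      have e1 : x.1 = y.2 := congrArg Prod.fst hxy
      have e2 : x.2 = y.1 := congrArg Prod.snd hxy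
      rw [← e1, ← e2] at hlty
      exact lt_asymm hltx hlty
    · exfalso
      have e1 : x.2 = y.1 := congrArg Prod.fst hxy
      have e2 : x.1 = y.2 := congrArg Prod.snd hxy
      rw [← e1, ← e2] at hlty
      exact lt_asymm hltx hlty
    · have e1 : x.2 = y.2 := congrArg Prod.fst hxy
      have e2 : x.1 = y.1 := congrArg Prod.snd hxy
      exact Prod.ext e2 e1

end Aux8
section Aux9
variable {q : ℕ}

/-- The partner index under the canonical form of `h`. -/
def pj (a : Fin q) : Fin q :=
  if a.val % 2 = 0 then
    (if hlt : a.val + 1 < q then ⟨a.val + 1, hlt⟩ else a)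
  else ⟨a.val - 1, Nat.lt_of_le_of_lt (Nat.sub_le _ _) a.isLt⟩

/-- The eigenvalue coefficient: `h(e_a) = bv a • e_{pj a}`. -/
def bv (b : Fin (q / 2) → ℝ) (a : Fin q) : ℝ :=
  if he : a.val % 2 = 0 then
    (if hlt : a.val + 1 < q then b ⟨a.val / 2, by omega⟩ else 0)
  else -b ⟨a.val / 2, by have := a.isLt; omega⟩

lemma pj_invol (a : Fin q) : pj (pj a) = a := by
  rcases a with ⟨v, hv⟩
  unfold pj
  by_cases he : v % 2 = 0
  · rw [if_pos he]
    by_cases hlt : v + 1 < q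
    · rw [dif_pos hlt]
      have h1 : (v + 1) % 2 = 1 := by omega
      simp only [if_neg (by omega : ¬ (v + 1) % 2 = 0)]
      exact Fin.ext (show v + 1 - 1 = v by omega)
    · rw [dif_neg hlt, if_pos he, dif_neg hlt]
  · rw [if_neg he]
    have h1 : (v - 1) % 2 = 0 := by omega
    simp only [if_pos h1]
    have h2 : v - 1 + 1 < q := by omega
    rw [dif_pos h2]
    exact Fin.ext (show v - 1 + 1 = v by omega)

lemma pj_inj {a c : Fin q} (hac : pj a = pj c) : a = c := by
  have := congrArg pj hac
  rwa [pj_invol, pj_invol] at this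

lemma bv_pj (b : Fin (q / 2) → ℝ) (a : Fin q) : bv b (pj a) = -(bv b a) := by
  rcases a with ⟨v, hv⟩
  unfold pj bv
  by_cases he : v % 2 = 0
  · rw [if_pos he, dif_pos he]
    by_cases hlt : v + 1 < q
    · rw [dif_pos hlt, dif_pos hlt]
      simp only [dif_neg (by omega : ¬ (v + 1) % 2 = 0)]
      congr 2
      exact Fin.ext (show (v + 1) / 2 = v / 2 by omega)
    · rw [dif_neg hlt, dif_neg hlt, dif_pos he, dif_neg hlt]
      norm_num
  · rw [if_neg he, dif_neg he]
    have h1 : (v - 1) % 2 = 0 := by omega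
    have h2 : v - 1 + 1 < q := by omega
    simp only [dif_pos h1, dif_pos h2]
    rw [neg_neg]
    congr 1
    exact Fin.ext (show (v - 1) / 2 = v / 2 by omega)

lemma bv_abs_le (hq : 2 ≤ q) (b : Fin (q / 2) → ℝ)
    (hord : ∀ k l : Fin (q / 2), k ≤ l → |b k| ≤ |b l|) (a : Fin q) :
    |bv b a| ≤ |b ⟨q / 2 - 1, (by omega : q / 2 - 1 + 1 ≤ q / 2)⟩| := by
  unfold bv
  by_cases he : a.val % 2 = 0
  · rw [dif_pos he]
    by_cases hlt : a.val + 1 < q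
    · rw [dif_pos hlt]
      exact hord _ _ (by rw [Fin.le_def]; simp only; omega)
    · rw [dif_neg hlt, abs_zero]
      exact abs_nonneg _
  · rw [dif_neg he, abs_neg]
    exact hord _ _ (by rw [Fin.le_def]; simp only; have := a.isLt; omega)

lemma dotP_eB (a c : Fin q) : dotP (eB a) (eB c) = if c = a then 1 else 0 := by
  unfold dotP eB
  rw [Finset.sum_eq_single a]
  · rw [Pi.single_eq_same, one_mul, Pi.single_apply]
    exact if_congr eq_comm rfl rfl
  · intro i _ hi
    rw [Pi.single_apply, if_neg hi, zero_mul]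
  · intro hc; exact absurd (Finset.mem_univ a) hc

end Aux9
section Aux10
variable {q : ℕ}

lemma h_eB_eq (hq : 2 ≤ q) (h : (Fin q → ℝ) →ₗ[ℝ] (Fin q → ℝ)) (b : Fin (q / 2) → ℝ)
    (hcan : ∀ k : Fin (q / 2),
      h (eB ⟨2 * (k : ℕ), (by have := k.isLt; omega : 2 * (k : ℕ) + 1 ≤ q)⟩)
          = b k • eB ⟨2 * (k : ℕ) + 1, (by have := k.isLt; omega : 2 * (k : ℕ) + 1 + 1 ≤ q)⟩ ∧
        h (eB ⟨2 * (k : ℕ) + 1, (by have := k.isLt; omega : 2 * (k : ℕ) + 1 + 1 ≤ q)⟩)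
          = (-(b k)) • eB ⟨2 * (k : ℕ), (by have := k.isLt; omega : 2 * (k : ℕ) + 1 ≤ q)⟩)
    (hodd : q % 2 = 1 → h (eB ⟨q - 1, (by omega : q - 1 + 1 ≤ q)⟩) = 0)
    (a : Fin q) : h (eB a) = bv b a • eB (pj a) := by
  rcases a with ⟨v, hv⟩
  by_cases he : v % 2 = 0
  · by_cases hlt : v + 1 < q
    · have hk : v / 2 < q / 2 := by omega
      have h1 := (hcan ⟨v / 2, hk⟩).1
      have e1 : (⟨2 * (v / 2), by omega⟩ : Fin q) = ⟨v, hv⟩ :=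
        Fin.ext (show 2 * (v / 2) = v by omega)
      have e2 : (⟨2 * (v / 2) + 1, by omega⟩ : Fin q) = (⟨v + 1, hlt⟩ : Fin q) :=
        Fin.ext (show 2 * (v / 2) + 1 = v + 1 by omega)
      rw [e1, e2] at h1
      rw [h1]
      unfold bv pj
      rw [dif_pos he, dif_pos hlt, if_pos he, dif_pos hlt]
    · have hqodd : q % 2 = 1 := by omega
      have h0 := hodd hqodd
      have e1 : (⟨q - 1, by omega⟩ : Fin q) = ⟨v, hv⟩ := Fin.ext (show q - 1 = v by omega)
      rw [e1] at h0
      rw [h0]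
      unfold bv pj
      rw [dif_pos he, dif_neg hlt, if_pos he, dif_neg hlt, zero_smul]
  · have hk : v / 2 < q / 2 := by omega
    have h1 := (hcan ⟨v / 2, hk⟩).2
    have e1 : (⟨2 * (v / 2) + 1, by omega⟩ : Fin q) = ⟨v, hv⟩ :=
      Fin.ext (show 2 * (v / 2) + 1 = v by omega)
    have e2 : (⟨2 * (v / 2), by omega⟩ : Fin q)
        = (⟨v - 1, Nat.lt_of_le_of_lt (Nat.sub_le _ _) hv⟩ : Fin q) :=
      Fin.ext (show 2 * (v / 2) = v - 1 by omega)
    rw [e1, e2] at h1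
    rw [h1]
    unfold bv pj
    rw [dif_neg he, if_neg he]

lemma dotP_smul_left (c : ℝ) (X Y : Fin q → ℝ) : dotP (c • X) Y = c * dotP X Y := by
  unfold dotP
  rw [Finset.mul_sum]
  exact Finset.sum_congr rfl fun i _ => by simp [mul_assoc]

/-- The matrix entries of `h`. -/
lemma H_eq (h : (Fin q → ℝ) →ₗ[ℝ] (Fin q → ℝ)) (b : Fin (q / 2) → ℝ)
    (hEq : ∀ a : Fin q, h (eB a) = bv b a • eB (pj a)) (a c : Fin q) :
    dotP (h (eB a)) (eB c) = if c = pj a then bv b a else 0 := by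
  rw [hEq a, dotP_smul_left, dotP_eB]
  split_ifs <;> ring

lemma H_skew (h : (Fin q → ℝ) →ₗ[ℝ] (Fin q → ℝ)) (b : Fin (q / 2) → ℝ)
    (hEq : ∀ a : Fin q, h (eB a) = bv b a • eB (pj a)) (a c : Fin q) :
    dotP (h (eB a)) (eB c) = -dotP (h (eB c)) (eB a) := by
  rw [H_eq h b hEq, H_eq h b hEq]
  by_cases hc : c = pj a
  · rw [if_pos hc, if_pos (by rw [hc, pj_invol]), hc, bv_pj, neg_neg]
  · rw [if_neg hc, if_neg (fun hc2 : a = pj c => hc (by rw [hc2, pj_invol])), neg_zero]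

/-- Basis 2-forms as wedges. -/
lemma bF_pair_eq_w2 {a c : Fin q} (hac : a < c) :
    bF ({a, c} : Finset (Fin q)) = w2 (eB a) (eB c) := by
  unfold w2
  have honeF : oneF (eB c) = bF {c} := by
    unfold oneF eB
    rw [Finset.sum_eq_single c]
    · rw [Pi.single_eq_same, one_smul]
    · intro i _ hi
      rw [Pi.single_apply, if_neg hi, zero_smul]
    · intro hc; exact absurd (Finset.mem_univ c) hc
  rw [honeF, wV_eB]
  funext s
  simp only [bF, wB]
  by_cases hs : a ∈ s
  · rw [if_pos hs]
    by_cases he : s = {a, c}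
    · rw [if_pos he, if_pos (by rw [he, Finset.erase_insert (by
        simp only [Finset.mem_singleton]; exact hac.ne)])]
      rw [he, Finset.erase_insert (by simp only [Finset.mem_singleton]; exact hac.ne)]
      rw [show sgn a ({c} : Finset (Fin q)) = 1 from by
        unfold sgn
        rw [Finset.filter_singleton, if_neg (not_lt.2 hac.le)]
        rfl]
      rw [mul_one]
    · rw [if_neg he, if_neg (fun hc : s.erase a = {c} => he (by
        rw [← Finset.insert_erase hs, hc]))]
      rw [mul_zero]
  · rw [if_neg hs, if_neg (fun he : s = {a, c} => hs (by
      rw [he]; exact Finset.mem_insert_self a {c}))]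

end Aux10
/-- Theorem 4.1 of the paper, pointwise algebraic content. For the
O'Neill tensor `h` in canonical form on `V = ℝ^q` (`m = ⌊q/2⌋`; if `q` is odd there is an
extra basis vector — here the last one — annihilated by `h`), for every `1 ≤ p ≤ q−1` and
every `p`-form `ω`, `⟨B_{R_ext}^{[p]} ω, ω⟩ ≥ −p(q−p) b_m² |ω|²`.
(Indices are shifted: paper's `e_k` is `eB ⟨k-1, _⟩`.) -/
theorem statement_9 (q : ℕ) (hq : 2 ≤ q)
    (h : (Fin q → ℝ) →ₗ[ℝ] (Fin q → ℝ)) (b : Fin (q / 2) → ℝ)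
    (hcan : ∀ k : Fin (q / 2),
      h (eB ⟨2 * (k : ℕ), by have := k.isLt; omega⟩)
          = b k • eB ⟨2 * (k : ℕ) + 1, by have := k.isLt; omega⟩ ∧
        h (eB ⟨2 * (k : ℕ) + 1, by have := k.isLt; omega⟩)
          = (-(b k)) • eB ⟨2 * (k : ℕ), by have := k.isLt; omega⟩)
    (hodd : q % 2 = 1 → h (eB ⟨q - 1, by omega⟩) = 0)
    (hord : ∀ k l : Fin (q / 2), k ≤ l → |b k| ≤ |b l|)
    (Rext : Ext q →ₗ[ℝ] Ext q)
    (hR2 : ∀ η : Ext q, homog 2 η → homog 2 (Rext η))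
    (hRf : ∀ X Y Z W : Fin q → ℝ,
      ip (Rext (w2 X Y)) (w2 Z W)
        = 2 * dotP (h X) Y * dotP (h Z) W - dotP (h Y) Z * dotP (h X) W
            - dotP (h Z) X * dotP (h Y) W)
    (p : ℕ) (hp1 : 1 ≤ p) (hpq : p ≤ q - 1)
    (ω : Ext q) (hω : homog p ω) :
    -((p : ℝ) * ((q : ℝ) - (p : ℝ)) * b ⟨q / 2 - 1, by omega⟩ ^ 2 * ip ω ω)
      ≤ Bform Rext ω ω := by
  classical
  have hEq : ∀ a : Fin q, h (eB a) = bv b a • eB (pj a) := h_eB_eq hq h b hcan hodd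
  -- abbreviations
  set Hm : Fin q → Fin q → ℝ := fun a c => dotP (h (eB a)) (eB c) with hHm
  set u : Fin q × Fin q → Ext q := fun x => brkt (bF ({x.1, x.2} : Finset (Fin q))) ω with hu
  set T : (Fin q × Fin q) → (Fin q × Fin q) → ℝ := fun x y => ip (u x) (u y) with hTdef
  set Om : Fin q × Fin q → ℝ := fun x => Hm x.1 x.2 with hOm
  set Ll : (Fin q × Fin q) → (Fin q × Fin q) → ℝ :=
    fun x y => Hm x.1 y.1 * Hm x.2 y.2 - Hm x.1 y.2 * Hm x.2 y.1 with hLl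
  set pp : Fin q × Fin q → Fin q × Fin q :=
    fun x => if pj x.1 < pj x.2 then (pj x.1, pj x.2) else (pj x.2, pj x.1) with hpp
  set B2 : ℝ := b ⟨q / 2 - 1, by omega⟩ ^ 2 with hB2
  have hB2nn : 0 ≤ B2 := sq_nonneg _
  have hHabs : ∀ a c : Fin q, |Hm a c| ≤ |bv b a| := by
    intro a c
    rw [hHm]
    simp only
    rw [H_eq h b hEq]
    split_ifs
    · exact le_refl _
    · rw [abs_zero]; exact abs_nonneg _
  -- Step 0 : Bform in terms of ordered pairs
  have hBf : Bform Rext ω ω = (1 / 4 : ℝ) * ∑ x ∈ prs q, ∑ y ∈ prs q,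
      ip (Rext (bF {x.1, x.2})) (bF {y.1, y.2}) * T x y := by
    unfold Bform
    congr 1
    rw [sum_twoSets_eq (fun r => ∑ t ∈ twoSets q,
      ip (Rext (bF r)) (bF t) * ip (brkt (bF r) ω) (brkt (bF t) ω))]
    refine Finset.sum_congr rfl fun x hx => ?_
    rw [sum_twoSets_eq (fun t =>
      ip (Rext (bF {x.1, x.2})) (bF t) * ip (brkt (bF {x.1, x.2}) ω) (brkt (bF t) ω))]
  -- Step 1 : R formula
  have hR : ∀ x ∈ prs q, ∀ y ∈ prs q,
      ip (Rext (bF ({x.1, x.2} : Finset (Fin q)))) (bF {y.1, y.2})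
        = 2 * Om x * Om y + Ll x y := by
    intro x hx y hy
    rw [bF_pair_eq_w2 (mem_prs.1 hx), bF_pair_eq_w2 (mem_prs.1 hy), hRf]
    have hs := H_skew h b hEq y.1 x.1
    rw [hOm, hLl]
    simp only
    rw [hHm]
    simp only
    rw [hs]
    ring
  -- Step 2 : positivity of the Ω part
  have hSa : 0 ≤ ∑ x ∈ prs q, ∑ y ∈ prs q, Om x * Om y * T x y := by
    have e0 : ∀ x y : Fin q × Fin q, Om x * Om y * T x y
        = ∑ t : Finset (Fin q), (Om x * u x t) * (Om y * u y t) := by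
      intro x y
      rw [hTdef]
      simp only [ip]
      rw [Finset.mul_sum]
      exact Finset.sum_congr rfl fun t _ => by ring
    have key : ∑ x ∈ prs q, ∑ y ∈ prs q, Om x * Om y * T x y
        = ∑ t : Finset (Fin q), (∑ x ∈ prs q, Om x * u x t) ^ 2 := by
      calc ∑ x ∈ prs q, ∑ y ∈ prs q, Om x * Om y * T x y
          = ∑ x ∈ prs q, ∑ y ∈ prs q, ∑ t : Finset (Fin q),
              (Om x * u x t) * (Om y * u y t) :=
            Finset.sum_congr rfl fun x _ => Finset.sum_congr rfl fun y _ => e0 x y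
        _ = ∑ x ∈ prs q, ∑ t : Finset (Fin q), ∑ y ∈ prs q,
              (Om x * u x t) * (Om y * u y t) :=
            Finset.sum_congr rfl fun x _ => Finset.sum_comm
        _ = ∑ t : Finset (Fin q), ∑ x ∈ prs q, ∑ y ∈ prs q,
              (Om x * u x t) * (Om y * u y t) := Finset.sum_comm
        _ = ∑ t : Finset (Fin q), (∑ x ∈ prs q, Om x * u x t) ^ 2 := by
            refine Finset.sum_congr rfl fun t _ => ?_
            rw [pow_two, Finset.sum_mul_sum (prs q) (prs q)
              (fun x => Om x * u x t) (fun y => Om y * u y t)]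
    rw [key]
    exact Finset.sum_nonneg fun t _ => sq_nonneg _
  -- properties of the partner involution
  have hppmem : ∀ x ∈ prs q, pp x ∈ prs q := by
    intro x hx
    have hne : pj x.1 ≠ pj x.2 := fun hc => (mem_prs.1 hx).ne (pj_inj hc)
    rw [hpp]
    simp only
    rcases lt_or_gt_of_ne hne with hlt | hlt
    · rw [if_pos hlt]; exact mem_prs.2 hlt
    · rw [if_neg (not_lt.2 hlt.le)]; exact mem_prs.2 hlt
  have hppinv : ∀ x ∈ prs q, pp (pp x) = x := by
    intro x hx
    have hxlt := mem_prs.1 hx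
    have hne : pj x.1 ≠ pj x.2 := fun hc => hxlt.ne (pj_inj hc)
    rw [hpp]
    simp only
    rcases lt_or_gt_of_ne hne with hlt | hlt
    · rw [if_pos hlt]
      simp only [pj_invol]
      rw [if_pos hxlt]
    · rw [if_neg (not_lt.2 hlt.le)]
      simp only [pj_invol]
      rw [if_neg (not_lt.2 hxlt.le)]
  -- Step 3 : the L part bound
  have hLbound : ∀ x ∈ prs q, ∀ y ∈ prs q,
      Ll x y * T x y ≥ -((if y = pp x then B2 else 0) * ((T x x + T y y) / 2)) := by
    intro x hx y hy
    have hxlt := mem_prs.1 hx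
    have hylt := mem_prs.1 hy
    by_cases hy' : y = pp x
    · rw [if_pos hy']
      -- |Ll x y| ≤ B2
      have hLabs : |Ll x y| ≤ B2 := by
        have hHne : pj x.1 ≠ pj x.2 := fun hc => hxlt.ne (pj_inj hc)
        have hone : Hm x.1 y.1 * Hm x.2 y.2 = 0 ∨ Hm x.1 y.2 * Hm x.2 y.1 = 0 := by
          by_cases h1 : y.1 = pj x.1
          · right
            have h2 : Hm x.2 y.1 = 0 := by
              rw [hHm]; simp only; rw [H_eq h b hEq, if_neg]
              intro hc
              exact hHne (h1 ▸ hc ▸ rfl)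
            rw [h2, mul_zero]
          · left
            have h2 : Hm x.1 y.1 = 0 := by
              rw [hHm]; simp only; rw [H_eq h b hEq, if_neg h1]
            rw [h2, zero_mul]
        have habs2 : ∀ a c a' c' : Fin q, |Hm a c * Hm a' c'| ≤ B2 := by
          intro a c a' c'
          rw [abs_mul]
          calc |Hm a c| * |Hm a' c'| ≤ |bv b a| * |bv b a'| :=
              mul_le_mul (hHabs a c) (hHabs a' c') (abs_nonneg _) (abs_nonneg _)
            _ ≤ B2 := by
              calc |bv b a| * |bv b a'|
                  ≤ |b ⟨q / 2 - 1, by omega⟩| * |b ⟨q / 2 - 1, by omega⟩| :=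
                    mul_le_mul (bv_abs_le hq b hord a) (bv_abs_le hq b hord a')
                      (abs_nonneg _) (abs_nonneg _)
                _ = B2 := by rw [hB2, ← abs_mul, abs_mul_self, pow_two]
        rcases hone with h0 | h0
        · rw [hLl]; simp only; rw [h0, zero_sub, abs_neg]
          exact habs2 _ _ _ _
        · rw [hLl]; simp only; rw [h0, sub_zero]
          exact habs2 _ _ _ _
      have hTabs : |T x y| ≤ (T x x + T y y) / 2 := ip_abs_le _ _
      have hTnn : 0 ≤ (T x x + T y y) / 2 := by
        have := ip_self_nonneg (u x)
        have := ip_self_nonneg (u y)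
        rw [hTdef]
        simp only
        linarith [ip_self_nonneg (u x), ip_self_nonneg (u y)]
      have habs : |Ll x y * T x y| ≤ B2 * ((T x x + T y y) / 2) := by
        rw [abs_mul]
        exact mul_le_mul hLabs hTabs (abs_nonneg _) hB2nn
      exact le_trans (neg_le_neg habs) (neg_abs_le _)
    · rw [if_neg hy', zero_mul, neg_zero]
      have hL0 : Ll x y = 0 := by
        rw [hLl]
        simp only
        rw [hHm]
        simp only
        rw [H_eq h b hEq, H_eq h b hEq, H_eq h b hEq, H_eq h b hEq]
        by_cases h1 : y.1 = pj x.1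
        · by_cases h2 : y.2 = pj x.2
          · exfalso
            apply hy'
            have hlt : pj x.1 < pj x.2 := by
              rw [← h1, ← h2]; exact hylt
            rw [hpp]
            simp only
            rw [if_pos hlt]
            exact Prod.ext h1 h2
          · rw [if_neg h2, if_neg (show ¬ y.1 = pj x.2 from fun hc =>
              hxlt.ne (pj_inj ((h1 ▸ hc : pj x.1 = pj x.2) : pj x.1 = pj x.2)))]
            ring
        · rw [if_neg h1]
          by_cases h3 : y.2 = pj x.1
          · by_cases h4 : y.1 = pj x.2
            · exfalso
              apply hy'
              have hlt : pj x.2 < pj x.1 := by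
                rw [← h3, ← h4]; exact hylt
              rw [hpp]
              simp only
              rw [if_neg (not_lt.2 hlt.le)]
              exact Prod.ext h4 h3
            · rw [if_neg h4]
              ring
          · rw [if_neg h3]
            ring
      rw [hL0, zero_mul]

  -- Step 4 : sum of the L part
  have hSb : ∑ x ∈ prs q, ∑ y ∈ prs q, Ll x y * T x y
      ≥ -(B2 * ∑ x ∈ prs q, T x x) := by
    have step1 : ∑ x ∈ prs q, ∑ y ∈ prs q, Ll x y * T x y
        ≥ ∑ x ∈ prs q, -(B2 * ((T x x + T (pp x) (pp x)) / 2)) := by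
      refine Finset.sum_le_sum fun x hx => ?_
      have e1 : ∑ y ∈ prs q, -((if y = pp x then B2 else 0) * ((T x x + T y y) / 2))
          = -(B2 * ((T x x + T (pp x) (pp x)) / 2)) := by
        rw [show (∑ y ∈ prs q, -((if y = pp x then B2 else 0) * ((T x x + T y y) / 2)))
            = ∑ y ∈ prs q, (if y = pp x then -(B2 * ((T x x + T y y) / 2)) else 0) from
          Finset.sum_congr rfl fun y _ => by split_ifs <;> ring]
        rw [Finset.sum_ite_eq' (prs q) (pp x)
          (fun y => -(B2 * ((T x x + T y y) / 2))), if_pos (hppmem x hx)]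
      calc -(B2 * ((T x x + T (pp x) (pp x)) / 2))
          = ∑ y ∈ prs q, -((if y = pp x then B2 else 0) * ((T x x + T y y) / 2)) := e1.symm
        _ ≤ ∑ y ∈ prs q, Ll x y * T x y :=
            Finset.sum_le_sum fun y hy => hLbound x hx y hy
    have step2 : ∑ x ∈ prs q, T (pp x) (pp x) = ∑ x ∈ prs q, T x x := by
      refine Finset.sum_bij (fun x hx => pp x) (fun x hx => hppmem x hx) ?_ ?_ (fun x hx => rfl)
      · intro x hx y hy hxy
        have := congrArg pp hxy
        rwa [hppinv x hx, hppinv y hy] at this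
      · intro y hy
        exact ⟨pp y, hppmem y hy, hppinv y hy⟩
    have step3 : ∑ x ∈ prs q, -(B2 * ((T x x + T (pp x) (pp x)) / 2))
        = -(B2 * ∑ x ∈ prs q, T x x) := by
      rw [Finset.sum_neg_distrib]
      rw [show (∑ x ∈ prs q, (B2 * ((T x x + T (pp x) (pp x)) / 2)))
          = B2 / 2 * ((∑ x ∈ prs q, T x x) + ∑ x ∈ prs q, T (pp x) (pp x)) from by
        rw [← Finset.sum_add_distrib, Finset.mul_sum]
        exact Finset.sum_congr rfl fun x _ => by ring]
      rw [step2]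
      ring
    rw [← step3]
    exact step1
  -- Step 5 : diagonal bound
  have hdiag : ∑ x ∈ prs q, T x x ≤ 4 * ((p : ℝ) * ((q : ℝ) - (p : ℝ))) * ip ω ω := by
    have hstep : ∀ x ∈ prs q, T x x
        ≤ ∑ S : Finset (Fin q), (if (S ∩ {x.1, x.2}).card % 2 = 1 then 4 * ω S ^ 2 else 0) := by
      intro x hx
      exact brkt_diag_le _ (Finset.card_pair (mem_prs.1 hx).ne) ω
    calc ∑ x ∈ prs q, T x x
        ≤ ∑ x ∈ prs q, ∑ S : Finset (Fin q),
            (if (S ∩ {x.1, x.2}).card % 2 = 1 then 4 * ω S ^ 2 else 0) :=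
          Finset.sum_le_sum hstep
      _ = ∑ S : Finset (Fin q), ∑ x ∈ prs q,
            (if (S ∩ {x.1, x.2}).card % 2 = 1 then 4 * ω S ^ 2 else 0) := Finset.sum_comm
      _ ≤ ∑ S : Finset (Fin q), (p : ℝ) * ((q : ℝ) - (p : ℝ)) * (4 * ω S ^ 2) := by
          refine Finset.sum_le_sum fun S _ => ?_
          rw [← Finset.sum_filter, Finset.sum_const, nsmul_eq_mul]
          by_cases hS : ω S = 0
          · rw [hS]
            norm_num
          · have hSp : S.card = p := by
              by_contra hc
              exact hS (hω S hc)
            have hcount := count_odd_pairs_le S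
            rw [hSp] at hcount
            have hqp : ((p * (q - p) : ℕ) : ℝ) = (p : ℝ) * ((q : ℝ) - (p : ℝ)) := by
              have hpq' : p ≤ q := by omega
              push_cast [Nat.cast_sub hpq']
              ring
            have hc2 : ((((prs q).filter
                (fun x => (S ∩ {x.1, x.2}).card % 2 = 1)).card : ℝ))
                ≤ (p : ℝ) * ((q : ℝ) - (p : ℝ)) := by
              rw [← hqp]
              exact_mod_cast hcount
            have hnn : (0 : ℝ) ≤ 4 * ω S ^ 2 := by positivity
            exact mul_le_mul_of_nonneg_right hc2 hnn
      _ = 4 * ((p : ℝ) * ((q : ℝ) - (p : ℝ))) * ip ω ω := by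
          simp only [ip]
          rw [Finset.mul_sum]
          refine Finset.sum_congr rfl fun S _ => ?_
          rw [pow_two]
          ring
  -- Final assembly
  have hsplit : ∑ x ∈ prs q, ∑ y ∈ prs q,
      ip (Rext (bF ({x.1, x.2} : Finset (Fin q)))) (bF {y.1, y.2}) * T x y
      = 2 * (∑ x ∈ prs q, ∑ y ∈ prs q, Om x * Om y * T x y)
        + ∑ x ∈ prs q, ∑ y ∈ prs q, Ll x y * T x y := by
    rw [Finset.mul_sum, ← Finset.sum_add_distrib]
    refine Finset.sum_congr rfl fun x hx => ?_
    rw [Finset.mul_sum, ← Finset.sum_add_distrib]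
    refine Finset.sum_congr rfl fun y hy => ?_
    rw [hR x hx y hy]
    ring
  rw [hBf, hsplit]
  have hfin : -(B2 * (4 * ((p : ℝ) * ((q : ℝ) - (p : ℝ))) * ip ω ω))
      ≤ -(B2 * ∑ x ∈ prs q, T x x) := by
    have := mul_le_mul_of_nonneg_left hdiag hB2nn
    linarith
  show -((p : ℝ) * ((q : ℝ) - (p : ℝ)) * B2 * ip ω ω)
      ≤ (1 / 4 : ℝ) * (2 * (∑ x ∈ prs q, ∑ y ∈ prs q, Om x * Om y * T x y)
        + ∑ x ∈ prs q, ∑ y ∈ prs q, Ll x y * T x y)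
  linarith [hSa, hSb, hfin]

end
end Paper
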